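/- Let A ∈ M_{p×p}(ℝ) be a constant matrix. If f : ℝ → ℂ^p is Z-almost automorphic, then the function (Υf)(t) = ∫_{⌊t⌋}^{t} e^{A(t−s)} f(s) ds, where ⌊·⌋ is the greatest integer function and e^{A} denotes the matrix exponential, is Z-almost automorphic. -/

import Mathlib

open MeasureTheory Filter Topology

/-- Bounded, piecewise continuous: continuous on ℝ ∖ ℤ with finite one-sided
limits at every integer. -/
def BddPC (p : ℕ) (f : ℝ → Fin p → ℂ) : Prop :=
  (∃ C : ℝ, ∀ t : ℝ, ‖f t‖ ≤ C) ∧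
  ContinuousOn f {t : ℝ | ∀ n : ℤ, t ≠ (n : ℝ)} ∧
  ∀ n : ℤ, (∃ L : Fin p → ℂ, Tendsto f (𝓝[<] (n : ℝ)) (𝓝 L)) ∧
           (∃ R : Fin p → ℂ, Tendsto f (𝓝[>] (n : ℝ)) (𝓝 R))

/-- `ℤ`-almost automorphic functions. -/
def ZAlmostAutomorphic (p : ℕ) (f : ℝ → Fin p → ℂ) : Prop :=
  BddPC p f ∧
  ∀ s : ℕ → ℤ, ∃ (φ : ℕ → ℕ) (g : ℝ → Fin p → ℂ), StrictMono φ ∧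
    (∀ t : ℝ, Tendsto (fun n => f (t + (s (φ n) : ℝ))) atTop (𝓝 (g t))) ∧
    (∀ t : ℝ, Tendsto (fun n => g (t - (s (φ n) : ℝ))) atTop (𝓝 (f t)))

/-- Almost automorphic functions in the sense of Bochner. -/
def AlmostAutomorphic (p : ℕ) (f : ℝ → Fin p → ℂ) : Prop :=
  (∃ C : ℝ, ∀ t : ℝ, ‖f t‖ ≤ C) ∧ Continuous f ∧
  ∀ s : ℕ → ℝ, ∃ (φ : ℕ → ℕ) (g : ℝ → Fin p → ℂ), StrictMono φ ∧
    (∀ t : ℝ, Tendsto (fun n => f (t + s (φ n))) atTop (𝓝 (g t))) ∧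
    (∀ t : ℝ, Tendsto (fun n => g (t - s (φ n))) atTop (𝓝 (f t)))


noncomputable section UpsilonAux

set_option maxHeartbeats 1000000

namespace UpsilonAux

variable {p : ℕ}

/-- The complex matrix `exp(u • A)` obtained by coercing entries. -/
def Emat (A : Matrix (Fin p) (Fin p) ℝ) (u : ℝ) : Matrix (Fin p) (Fin p) ℂ :=
  (Complex.ofRealHom.mapMatrix : Matrix (Fin p) (Fin p) ℝ →+* Matrix (Fin p) (Fin p) ℂ)
    (NormedSpace.exp (u • A))

lemma Emat_apply (A : Matrix (Fin p) (Fin p) ℝ) (u : ℝ) (i j : Fin p) :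
    Emat A u i j = ((NormedSpace.exp (u • A) i j : ℝ) : ℂ) := rfl

lemma Emat_add (A : Matrix (Fin p) (Fin p) ℝ) (u v : ℝ) :
    Emat A (u + v) = Emat A u * Emat A v := by
  have hc : Commute (u • A) (v • A) := by
    show _ = _
    rw [smul_mul_assoc, mul_smul_comm, smul_mul_assoc, mul_smul_comm, smul_comm]
  rw [Emat, add_smul, Matrix.exp_add_of_commute _ _ hc, map_mul]
  rfl

section ContE
attribute [local instance] Matrix.linftyOpNormedRing Matrix.linftyOpNormedAlgebra

lemma expA_continuous (A : Matrix (Fin p) (Fin p) ℝ) :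
    Continuous (fun t : ℝ => NormedSpace.exp (t • A)) :=
  NormedSpace.exp_continuous.comp (continuous_id.smul continuous_const)

end ContE

attribute [local instance] Matrix.normedAddCommGroup

lemma Emat_continuous (A : Matrix (Fin p) (Fin p) ℝ) : Continuous (Emat A) := by
  apply continuous_pi; intro i; apply continuous_pi; intro j
  have : Continuous fun t : ℝ => NormedSpace.exp (t • A) i j :=
    ((continuous_apply j).comp ((continuous_apply i).comp (expA_continuous A)))
  exact Complex.continuous_ofReal.comp this

lemma norm_mulVec_le (M : Matrix (Fin p) (Fin p) ℂ) (v : Fin p → ℂ) :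
    ‖M.mulVec v‖ ≤ (p : ℝ) * ‖M‖ * ‖v‖ := by
  have hnn : (0:ℝ) ≤ (p : ℝ) * ‖M‖ * ‖v‖ := by positivity
  rw [pi_norm_le_iff_of_nonneg hnn]
  intro i
  calc ‖M.mulVec v i‖ = ‖∑ j, M i j * v j‖ := rfl
    _ ≤ ∑ j, ‖M i j * v j‖ := norm_sum_le _ _
    _ ≤ ∑ _j : Fin p, ‖M‖ * ‖v‖ := by
        apply Finset.sum_le_sum
        intro j _
        rw [norm_mul]
        have h1 : ‖M i j‖ ≤ ‖M‖ := le_trans (norm_le_pi_norm (M i) j) (norm_le_pi_norm M i)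
        exact mul_le_mul h1 (norm_le_pi_norm v j) (norm_nonneg _) (norm_nonneg _)
    _ = (p : ℝ) * ‖M‖ * ‖v‖ := by
        rw [Finset.sum_const, Finset.card_univ, Fintype.card_fin, nsmul_eq_mul, mul_assoc]

lemma continuous_mulVec {X : Type*} [TopologicalSpace X]
    {M : X → Matrix (Fin p) (Fin p) ℂ} {v : X → Fin p → ℂ}
    (hM : Continuous M) (hv : Continuous v) :
    Continuous fun x => (M x).mulVec (v x) := by
  apply continuous_pi; intro i
  show Continuous fun x => ∑ j, M x i j * v x j
  exact continuous_finset_sum _ fun j _ =>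
    (((continuous_apply j).comp ((continuous_apply i).comp hM)).mul
      ((continuous_apply j).comp hv))

lemma aesm_mulVec {μ : Measure ℝ} {M : ℝ → Matrix (Fin p) (Fin p) ℂ}
    {v : ℝ → Fin p → ℂ} (hM : Continuous M) (hv : AEStronglyMeasurable v μ) :
    AEStronglyMeasurable (fun x => (M x).mulVec (v x)) μ := by
  have hΦ : Continuous fun q : Matrix (Fin p) (Fin p) ℂ × (Fin p → ℂ) => q.1.mulVec q.2 :=
    continuous_mulVec continuous_fst continuous_snd
  haveI : TopologicalSpace.PseudoMetrizableSpace (Matrix (Fin p) (Fin p) ℂ) :=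
    inferInstanceAs (TopologicalSpace.PseudoMetrizableSpace (Fin p → Fin p → ℂ))
  exact hΦ.comp_aestronglyMeasurable (hM.aestronglyMeasurable.prodMk hv)

/-- `f` is a.e. strongly measurable from piecewise continuity. -/
lemma aesm_of_bddpc {f : ℝ → Fin p → ℂ} (hf : BddPC p f) :
    AEStronglyMeasurable f (volume : Measure ℝ) := by
  set S : Set ℝ := {t : ℝ | ∀ n : ℤ, t ≠ (n : ℝ)} with hS
  have hSc : Sᶜ = Set.range ((↑) : ℤ → ℝ) := by
    ext t
    simp [hS, Set.mem_range, eq_comm]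
  have hSmeas : MeasurableSet S := by
    rw [← compl_compl S, hSc]
    exact ((Set.countable_range _).measurableSet).compl
  have h0 : volume Sᶜ = 0 := by
    rw [hSc]; exact (Set.countable_range _).measure_zero _
  have hmem : ∀ᵐ x ∂(volume : Measure ℝ), x ∈ S := by
    rw [ae_iff]
    exact h0
  have := hf.2.1.aestronglyMeasurable (μ := (volume : Measure ℝ)) hSmeas
  rwa [Measure.restrict_eq_self_of_ae_mem hmem] at this

lemma intervalIntegrable_of_bdd {h : ℝ → Fin p → ℂ} {C : ℝ}
    (hm : AEStronglyMeasurable h (volume : Measure ℝ))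
    (hC : ∀ t, ‖h t‖ ≤ C) (a b : ℝ) :
    IntervalIntegrable h volume a b := by
  rw [intervalIntegrable_iff]
  apply Integrable.mono' (g := fun _ => C)
  · exact integrableOn_const (C := C) measure_Ioc_lt_top.ne
  · exact hm.restrict
  · exact ae_of_all _ hC

variable (A : Matrix (Fin p) (Fin p) ℝ)

/-- bound constant for `Emat` on `[0,1]`. -/
lemma exists_M0 : ∃ M0 : ℝ, 0 ≤ M0 ∧ ∀ u ∈ Set.Icc (0:ℝ) 1, ‖Emat A u‖ ≤ M0 := by
  obtain ⟨M0, hM0⟩ := isCompact_Icc.exists_bound_of_continuousOn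
    ((Emat_continuous A).continuousOn (s := Set.Icc (0:ℝ) 1))
  exact ⟨M0, le_trans (norm_nonneg _) (hM0 0 ⟨le_refl 0, zero_le_one⟩), hM0⟩

/-- interval integrability of the kernel against a bounded measurable function -/
lemma intervalIntegrable_kern {v : ℝ → Fin p → ℂ} {C : ℝ}
    (hm : AEStronglyMeasurable v (volume : Measure ℝ)) (hC : ∀ t, ‖v t‖ ≤ C)
    (t a b : ℝ) :
    IntervalIntegrable (fun u => (Emat A (t - u)).mulVec (v u)) volume a b := by
  have hcont : Continuous fun u : ℝ => Emat A (t - u) :=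
    (Emat_continuous A).comp (continuous_const.sub continuous_id)
  have haesm : AEStronglyMeasurable (fun u => (Emat A (t - u)).mulVec (v u))
      (volume : Measure ℝ) := aesm_mulVec hcont hm
  obtain ⟨K, hK⟩ := (isCompact_uIcc (a := a) (b := b)).exists_bound_of_continuousOn
    (hcont.norm.continuousOn)
  rw [intervalIntegrable_iff]
  apply Integrable.mono' (g := fun _ => (p : ℝ) * K * C)
  · exact integrableOn_const (C := (p : ℝ) * K * C) measure_Ioc_lt_top.ne
  · exact haesm.restrict
  · rw [ae_restrict_iff' measurableSet_uIoc]
    apply ae_of_all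
    intro u hu
    have hu' : u ∈ Set.uIcc a b := Set.uIoc_subset_uIcc hu
    calc ‖(Emat A (t - u)).mulVec (v u)‖ ≤ (p : ℝ) * ‖Emat A (t - u)‖ * ‖v u‖ :=
          norm_mulVec_le _ _
      _ ≤ (p : ℝ) * K * C := by
          have h1 : ‖Emat A (t - u)‖ ≤ K := by simpa using hK u hu'
          have h2 : ‖v u‖ ≤ C := hC u
          have hnv : (0:ℝ) ≤ ‖v u‖ := norm_nonneg _
          have hK0 : 0 ≤ K := le_trans (norm_nonneg (Emat A (t-u))) h1
          have hC0 : 0 ≤ C := le_trans hnv h2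
          apply mul_le_mul _ h2 hnv (by positivity)
          exact mul_le_mul_of_nonneg_left h1 (Nat.cast_nonneg p)

/-- key bound on `Ioc ⌊t⌋ t` -/
lemma kern_bound {M0 C : ℝ} (hM0 : ∀ u ∈ Set.Icc (0:ℝ) 1, ‖Emat A u‖ ≤ M0)
    (hM00 : 0 ≤ M0) {v : Fin p → ℂ} (hC : ‖v‖ ≤ C) {t u : ℝ}
    (hu : u ∈ Set.uIoc ((⌊t⌋ : ℤ) : ℝ) t) :
    ‖(Emat A (t - u)).mulVec v‖ ≤ (p : ℝ) * M0 * C := by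
  have hfl : ((⌊t⌋ : ℤ) : ℝ) ≤ t := Int.floor_le t
  rw [Set.uIoc_of_le hfl] at hu
  have h01 : t - u ∈ Set.Icc (0:ℝ) 1 := by
    constructor
    · linarith [hu.2]
    · have := Int.sub_one_lt_floor t
      linarith [hu.1]
  have hC0 : (0:ℝ) ≤ C := le_trans (norm_nonneg _) hC
  calc ‖(Emat A (t - u)).mulVec v‖ ≤ (p : ℝ) * ‖Emat A (t - u)‖ * ‖v‖ := norm_mulVec_le _ _
    _ ≤ (p : ℝ) * M0 * C := by
        apply mul_le_mul _ hC (norm_nonneg _) (by positivity)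
        exact mul_le_mul_of_nonneg_left (hM0 _ h01) (Nat.cast_nonneg p)

/-- factorization `∫ₐᵇ e^{(t-s)A} v(s) ds = e^{tA} ∫ₐᵇ e^{-sA} v(s) ds`. -/
lemma integral_kern_factor {v : ℝ → Fin p → ℂ} {C : ℝ}
    (hm : AEStronglyMeasurable v (volume : Measure ℝ)) (hC : ∀ t, ‖v t‖ ≤ C)
    (t a b : ℝ) :
    (∫ u in a..b, (Emat A (t - u)).mulVec (v u)) =
      (Emat A t).mulVec (∫ u in a..b, (Emat A (-u)).mulVec (v u)) := by
  have hpt : ∀ u : ℝ, (Emat A (t - u)).mulVec (v u)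
      = (Emat A t).mulVec ((Emat A (-u)).mulVec (v u)) := by
    intro u
    rw [Matrix.mulVec_mulVec, ← Emat_add]
    ring_nf
  simp_rw [hpt]
  have hint : IntervalIntegrable (fun u => (Emat A (-u)).mulVec (v u)) volume a b := by
    have := intervalIntegrable_kern A hm hC 0 a b
    simpa using this
  set L : (Fin p → ℂ) →L[ℂ] (Fin p → ℂ) :=
    LinearMap.toContinuousLinearMap (Matrix.mulVecLin (Emat A t)) with hL
  have hLapp : ∀ w : Fin p → ℂ, L w = (Emat A t).mulVec w := fun w => rfl
  calc (∫ u in a..b, (Emat A t).mulVec ((Emat A (-u)).mulVec (v u)))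
      = ∫ u in a..b, L ((Emat A (-u)).mulVec (v u)) := by simp_rw [hLapp]
    _ = L (∫ u in a..b, (Emat A (-u)).mulVec (v u)) :=
        ContinuousLinearMap.intervalIntegral_comp_comm L hint
    _ = (Emat A t).mulVec (∫ u in a..b, (Emat A (-u)).mulVec (v u)) := hLapp _


section Main

variable (A : Matrix (Fin p) (Fin p) ℝ)

/-- The operator `Υ`. -/
def Ups (v : ℝ → Fin p → ℂ) (t : ℝ) : Fin p → ℂ :=
  ∫ s in ((⌊t⌋ : ℤ) : ℝ)..t, (Emat A (t - s)).mulVec (v s)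

/-- primitive of `u ↦ e^{-uA} v(u)`. -/
def Gprim (v : ℝ → Fin p → ℂ) (t : ℝ) : Fin p → ℂ :=
  ∫ u in (0:ℝ)..t, (Emat A (-u)).mulVec (v u)

variable {v : ℝ → Fin p → ℂ} {C : ℝ}

lemma Gprim_continuous (hm : AEStronglyMeasurable v (volume : Measure ℝ))
    (hC : ∀ t, ‖v t‖ ≤ C) : Continuous (Gprim A v) := by
  apply intervalIntegral.continuous_primitive
  intro a b
  simpa using intervalIntegrable_kern A hm hC 0 a b

lemma Ups_eq_H (hm : AEStronglyMeasurable v (volume : Measure ℝ))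
    (hC : ∀ t, ‖v t‖ ≤ C) (t : ℝ) :
    Ups A v t = (Emat A t).mulVec (Gprim A v t - Gprim A v ((⌊t⌋ : ℤ) : ℝ)) := by
  have hint : ∀ a b : ℝ, IntervalIntegrable (fun u => (Emat A (-u)).mulVec (v u)) volume a b := by
    intro a b; simpa using intervalIntegrable_kern A hm hC 0 a b
  rw [Ups, integral_kern_factor A hm hC]
  have heq : (∫ u in ((⌊t⌋ : ℤ) : ℝ)..t, (Emat A (-u)).mulVec (v u))
      = Gprim A v t - Gprim A v ((⌊t⌋ : ℤ) : ℝ) :=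
    (intervalIntegral.integral_interval_sub_left (hint 0 t) (hint 0 _)).symm
  rw [heq]

lemma floor_eq_of_Ioo {n : ℤ} {t : ℝ} (ht : t ∈ Set.Ioo ((n : ℝ)) ((n : ℝ) + 1)) :
    ⌊t⌋ = n := by
  rw [Int.floor_eq_iff]
  exact ⟨le_of_lt ht.1, ht.2⟩

lemma bddpc_Ups (hm : AEStronglyMeasurable v (volume : Measure ℝ))
    (hC : ∀ t, ‖v t‖ ≤ C) : BddPC p (Ups A v) := by
  obtain ⟨M0, hM00, hM0⟩ := exists_M0 A
  have hCnn : (0:ℝ) ≤ C := le_trans (norm_nonneg _) (hC 0)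
  have hGc : Continuous (Gprim A v) := Gprim_continuous A hm hC
  have hH : ∀ c : ℝ, Continuous fun t => (Emat A t).mulVec (Gprim A v t - Gprim A v c) :=
    fun c => continuous_mulVec (Emat_continuous A) (hGc.sub continuous_const)
  refine ⟨⟨(p : ℝ) * M0 * C, ?_⟩, ?_, ?_⟩
  · intro t
    have hb := intervalIntegral.norm_integral_le_of_norm_le_const
      (C := (p : ℝ) * M0 * C) (a := ((⌊t⌋ : ℤ) : ℝ)) (b := t)
      (f := fun u => (Emat A (t - u)).mulVec (v u))
      (fun u hu => kern_bound A hM0 hM00 (hC u) hu)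
    have habs : |t - ((⌊t⌋ : ℤ) : ℝ)| ≤ 1 := by
      rw [abs_of_nonneg (by linarith [Int.floor_le t])]
      linarith [Int.sub_one_lt_floor t]
    calc ‖Ups A v t‖ ≤ ((p : ℝ) * M0 * C) * |t - ((⌊t⌋ : ℤ) : ℝ)| := hb
      _ ≤ ((p : ℝ) * M0 * C) * 1 := by
          exact mul_le_mul_of_nonneg_left habs (by positivity)
      _ = (p : ℝ) * M0 * C := mul_one _
  · -- continuity away from the integers
    intro t ht
    apply ContinuousAt.continuousWithinAt
    have h1 : ((⌊t⌋ : ℤ) : ℝ) < t :=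
      lt_of_le_of_ne (Int.floor_le t) fun h => (ht ⌊t⌋) h.symm
    have h2 : t < ((⌊t⌋ : ℤ) : ℝ) + 1 := Int.lt_floor_add_one t
    have hev : (fun x => (Emat A x).mulVec (Gprim A v x - Gprim A v ((⌊t⌋ : ℤ) : ℝ)))
        =ᶠ[𝓝 t] Ups A v := by
      filter_upwards [Ioo_mem_nhds h1 h2] with x hx
      rw [Ups_eq_H A hm hC x, floor_eq_of_Ioo hx]
    exact ((hH _).continuousAt).congr hev
  · intro n
    constructor
    · -- left limit at n
      refine ⟨(Emat A ((n : ℤ) : ℝ)).mulVec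
        (Gprim A v ((n : ℤ) : ℝ) - Gprim A v (((n - 1 : ℤ) : ℤ) : ℝ)), ?_⟩
      have hcont : Tendsto (fun x => (Emat A x).mulVec (Gprim A v x - Gprim A v ((n - 1 : ℤ) : ℝ)))
          (𝓝[<] ((n : ℤ) : ℝ)) (𝓝 ((Emat A ((n : ℤ) : ℝ)).mulVec
            (Gprim A v ((n : ℤ) : ℝ) - Gprim A v ((n - 1 : ℤ) : ℝ)))) :=
        ((hH _).tendsto _).mono_left nhdsWithin_le_nhds
      apply hcont.congr'
      have hmem : Set.Ioo (((n - 1 : ℤ) : ℝ)) ((n : ℤ) : ℝ) ∈ 𝓝[<] ((n : ℤ) : ℝ) := by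
        apply Ioo_mem_nhdsLT_of_mem
        constructor
        · push_cast; linarith
        · exact le_refl _
      filter_upwards [hmem] with x hx
      have hfl : ⌊x⌋ = n - 1 := by
        apply floor_eq_of_Ioo
        constructor
        · exact hx.1
        · push_cast at hx ⊢; linarith [hx.2]
      rw [Ups_eq_H A hm hC x, hfl]
    · -- right limit at n
      refine ⟨(Emat A ((n : ℤ) : ℝ)).mulVec
        (Gprim A v ((n : ℤ) : ℝ) - Gprim A v ((n : ℤ) : ℝ)), ?_⟩
      have hcont : Tendsto (fun x => (Emat A x).mulVec (Gprim A v x - Gprim A v ((n : ℤ) : ℝ)))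
          (𝓝[>] ((n : ℤ) : ℝ)) (𝓝 ((Emat A ((n : ℤ) : ℝ)).mulVec
            (Gprim A v ((n : ℤ) : ℝ) - Gprim A v ((n : ℤ) : ℝ)))) :=
        ((hH _).tendsto _).mono_left nhdsWithin_le_nhds
      apply hcont.congr'
      have hmem : Set.Ioo ((n : ℤ) : ℝ) (((n : ℤ) : ℝ) + 1) ∈ 𝓝[>] ((n : ℤ) : ℝ) := by
        apply Ioo_mem_nhdsGT_of_mem
        exact ⟨le_refl _, by linarith⟩
      filter_upwards [hmem] with x hx
      rw [Ups_eq_H A hm hC x, floor_eq_of_Ioo hx]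

/-- dominated convergence for the kernel integral. -/
lemma tendsto_Ups_aux (t : ℝ) {vseq : ℕ → ℝ → Fin p → ℂ} {w : ℝ → Fin p → ℂ}
    (hm : ∀ n, AEStronglyMeasurable (vseq n) (volume : Measure ℝ))
    (hC : ∀ n u, ‖vseq n u‖ ≤ C)
    (hlim : ∀ u, Tendsto (fun n => vseq n u) atTop (𝓝 (w u))) :
    Tendsto (fun n => ∫ u in ((⌊t⌋ : ℤ) : ℝ)..t, (Emat A (t - u)).mulVec (vseq n u)) atTop
      (𝓝 (∫ u in ((⌊t⌋ : ℤ) : ℝ)..t, (Emat A (t - u)).mulVec (w u))) := by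
  obtain ⟨M0, hM00, hM0⟩ := exists_M0 A
  have hcont : Continuous fun u : ℝ => Emat A (t - u) :=
    (Emat_continuous A).comp (continuous_const.sub continuous_id)
  apply intervalIntegral.tendsto_integral_filter_of_dominated_convergence
    (bound := fun _ => (p : ℝ) * M0 * C)
  · exact Eventually.of_forall fun n => (aesm_mulVec hcont (hm n)).restrict
  · apply Eventually.of_forall
    intro n
    apply ae_of_all
    intro u hu
    exact kern_bound A hM0 hM00 (hC n u) hu
  · exact intervalIntegrable_const
  · apply ae_of_all
    intro u _
    have hmv : Continuous fun z : Fin p → ℂ => (Emat A (t - u)).mulVec z :=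
      continuous_mulVec continuous_const continuous_id
    exact (hmv.tendsto _).comp (hlim u)

lemma Ups_add_int (w : ℝ → Fin p → ℂ) (t : ℝ) (m : ℤ) :
    Ups A w (t + (m : ℝ)) =
      ∫ u in ((⌊t⌋ : ℤ) : ℝ)..t, (Emat A (t - u)).mulVec (w (u + (m : ℝ))) := by
  rw [Ups, Int.floor_add_intCast]
  have h := intervalIntegral.integral_comp_add_right
    (a := ((⌊t⌋ : ℤ) : ℝ)) (b := t)
    (fun s => (Emat A (t + (m : ℝ) - s)).mulVec (w s)) (m : ℝ)
  push_cast
  rw [← h]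
  simp [add_sub_add_right_eq_sub]

end Main

end UpsilonAux

end UpsilonAux

open UpsilonAux in
/-- If `A ∈ M_{p×p}(ℝ)` is a constant matrix and `f` is `ℤ`-almost automorphic, then
`(Υf)(t) = ∫_{⌊t⌋}^{t} e^{A(t-s)} f(s) ds` is `ℤ`-almost automorphic. -/
theorem upsilon_zAlmostAutomorphic {p : ℕ}
    (A : Matrix (Fin p) (Fin p) ℝ)
    (f : ℝ → Fin p → ℂ) (hf : ZAlmostAutomorphic p f) :
    ZAlmostAutomorphic p
      (fun t : ℝ => ∫ s in ((⌊t⌋ : ℤ) : ℝ)..t,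
        (fun i : Fin p =>
          ∑ j : Fin p, ((NormedSpace.exp ((t - s) • A) i j : ℝ) : ℂ) * f s j)) := by
  obtain ⟨C, hC⟩ := hf.1.1
  have hmf : AEStronglyMeasurable f (volume : Measure ℝ) := aesm_of_bddpc hf.1
  have hFeq : (fun t : ℝ => ∫ s in ((⌊t⌋ : ℤ) : ℝ)..t,
      (fun i : Fin p =>
        ∑ j : Fin p, ((NormedSpace.exp ((t - s) • A) i j : ℝ) : ℂ) * f s j))
      = Ups A f := by
    funext t
    simp only [Ups]
    congr 1
  rw [hFeq]
  constructor
  · exact bddpc_Ups A hmf hC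
  · intro s
    obtain ⟨φ, g, hφ, hg1, hg2⟩ := hf.2 s
    have hgC : ∀ t, ‖g t‖ ≤ C := fun t =>
      le_of_tendsto ((hg1 t).norm) (Eventually.of_forall fun n => hC _)
    have hshift : ∀ c : ℝ, AEStronglyMeasurable (fun x : ℝ => f (x + c)) (volume : Measure ℝ) :=
      fun c => hmf.comp_measurePreserving (measurePreserving_add_right volume c)
    have hmg : AEStronglyMeasurable g (volume : Measure ℝ) :=
      aestronglyMeasurable_of_tendsto_ae atTop (fun n => hshift _) (ae_of_all _ hg1)
    have hgshift : ∀ c : ℝ, AEStronglyMeasurable (fun x : ℝ => g (x - c)) (volume : Measure ℝ) :=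
      fun c => by
        exact hmg.comp_measurePreserving (measurePreserving_sub_right volume c)
    refine ⟨φ, Ups A g, hφ, ?_, ?_⟩
    · intro t
      have key := tendsto_Ups_aux A (C := C) t
        (vseq := fun n u => f (u + ((s (φ n) : ℤ) : ℝ))) (w := g)
        (fun n => hshift _) (fun n u => hC _) (fun u => hg1 u)
      have hre : ∀ n : ℕ, Ups A f (t + ((s (φ n) : ℤ) : ℝ)) =
          ∫ u in ((⌊t⌋ : ℤ) : ℝ)..t,
            (Emat A (t - u)).mulVec (f (u + ((s (φ n) : ℤ) : ℝ))) :=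
        fun n => Ups_add_int A f t (s (φ n))
      simp only [hre]
      exact key
    · intro t
      have key := tendsto_Ups_aux A (C := C) t
        (vseq := fun n u => g (u - ((s (φ n) : ℤ) : ℝ))) (w := f)
        (fun n => hgshift _) (fun n u => hgC _) (fun u => hg2 u)
      have hre : ∀ n : ℕ, Ups A g (t - ((s (φ n) : ℤ) : ℝ)) =
          ∫ u in ((⌊t⌋ : ℤ) : ℝ)..t,
            (Emat A (t - u)).mulVec (g (u - ((s (φ n) : ℤ) : ℝ))) := by
        intro n
        have h := Ups_add_int A g t (-(s (φ n)))
        push_cast at h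
        simpa [sub_eq_add_neg] using h
      simp only [hre]
      exact key
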